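/- Let A and B be contractions on a Banach space satisfying condition (W'): ‖Ax‖ = ‖x‖ ⟹ Ax = x, and similarly for B. Then Ker(I - AB) = Ker(I - A) ∩ Ker(I - B). -/

import Mathlib

theorem stmt14 {X : Type*} [NormedAddCommGroup X] [NormedSpace ℂ X] [CompleteSpace X]
    (A B : X →L[ℂ] X) (hA : ‖A‖ ≤ 1) (hB : ‖B‖ ≤ 1)
    (hWA : ∀ x : X, ‖A x‖ = ‖x‖ → A x = x)
    (hWB : ∀ x : X, ‖B x‖ = ‖x‖ → B x = x) :
    LinearMap.ker ((1 - A * B : X →L[ℂ] X) : X →ₗ[ℂ] X) = LinearMap.ker ((1 - A : X →L[ℂ] X) : X →ₗ[ℂ] X) ⊓ LinearMap.ker ((1 - B : X →L[ℂ] X) : X →ₗ[ℂ] X) := by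
  ext x
  simp only [LinearMap.mem_ker, Submodule.mem_inf, ContinuousLinearMap.coe_coe, ContinuousLinearMap.coe_sub',
    Pi.sub_apply, ContinuousLinearMap.one_apply, ContinuousLinearMap.mul_apply,
    sub_eq_zero]
  constructor
  · intro h
    -- h : x = A (B x)
    have hABx : A (B x) = x := h.symm
    have h1 : ‖x‖ ≤ ‖B x‖ := by
      calc ‖x‖ = ‖A (B x)‖ := by rw [hABx]
        _ ≤ ‖A‖ * ‖B x‖ := A.le_opNorm _
        _ ≤ 1 * ‖B x‖ := by
            exact mul_le_mul_of_nonneg_right hA (norm_nonneg _)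
        _ = ‖B x‖ := one_mul _
    have h2 : ‖B x‖ ≤ ‖x‖ := by
      calc ‖B x‖ ≤ ‖B‖ * ‖x‖ := B.le_opNorm _
        _ ≤ 1 * ‖x‖ := mul_le_mul_of_nonneg_right hB (norm_nonneg _)
        _ = ‖x‖ := one_mul _
    have hBx : ‖B x‖ = ‖x‖ := le_antisymm h2 h1
    have hAB : ‖A (B x)‖ = ‖B x‖ := by rw [hABx, hBx]
    have hABeq : A (B x) = B x := hWA _ hAB
    have hBxx : B x = x := by rw [← hABeq, hABx]
    exact ⟨(hBxx ▸ hABeq : A x = x).symm, hBxx.symm⟩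
  · rintro ⟨hAx, hBx⟩
    rw [← hBx, ← hAx]
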